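/- Let R, R̂ : ℝ → SO(3) and P, P̂, p̂ᵢ : ℝ → ℝ³ be differentiable, where the true pose satisfies Ṙ = R[Ω]×, Ṗ = R V, the observer satisfies Ṙ̂ = R̂[Ω_m − b̂_Ω − W_Ω]×, Ṗ̂ = R̂(V_m − b̂_V − W_V) with Ω_m = Ω + b_Ω, V_m = V + b_V for constant biases b_Ω, b_V ∈ ℝ³, and the landmark pᵢ ∈ ℝ³ is constant. Define yᵢ = Rᵀ(pᵢ − P), eᵢ = p̂ᵢ − (R̂ yᵢ + P̂), b̃_Ω = b_Ω − b̂_Ω, b̃_V = b_V − b̂_V. Then the error dynamics are ėᵢ(t) = ṗ̂ᵢ(t) + R̂(t)[yᵢ(t)]×(b̃_Ω(t) − W_Ω(t)) − R̂(t)(b̃_V(t) − W_V(t)) for all t. -/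

import Mathlib

open Matrix Real Filter Topology

/-- Skew-symmetric (cross-product) matrix `[y]×`. -/
def skew (y : Fin 3 → ℝ) : Matrix (Fin 3) (Fin 3) ℝ :=
  !![0, -y 2, y 1; y 2, 0, -y 0; -y 1, y 0, 0]

/-- Homogeneous transformation matrix `[[R, P],[0,1]]`. -/
def hom (R : Matrix (Fin 3) (Fin 3) ℝ) (P : Fin 3 → ℝ) :
    Matrix (Fin 3 ⊕ Fin 1) (Fin 3 ⊕ Fin 1) ℝ :=
  Matrix.fromBlocks R (Matrix.replicateCol (Fin 1) P) 0 1

/-- Wedge map `[U]∧` for `U = (u₁, u₂) ∈ ℝ⁶`. -/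
def wedge (u₁ u₂ : Fin 3 → ℝ) : Matrix (Fin 3 ⊕ Fin 1) (Fin 3 ⊕ Fin 1) ℝ :=
  Matrix.fromBlocks (skew u₁) (Matrix.replicateCol (Fin 1) u₂) 0 0

/-- Euclidean norm on ℝ³: `‖v‖ = √(vᵀ v)`. -/
noncomputable def norm3 (v : Fin 3 → ℝ) : ℝ := Real.sqrt (v ⬝ᵥ v)

/-- Rodrigues (angle-axis) rotation matrix. -/
noncomputable def rodrigues (θ : ℝ) (x : Fin 3 → ℝ) : Matrix (Fin 3) (Fin 3) ℝ :=
  1 + Real.sin θ • skew x + (1 - Real.cos θ) • (skew x * skew x)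

/-- Homogeneous 4-vector `(v, a)ᵀ`. -/
def vec4 (v : Fin 3 → ℝ) (a : ℝ) : Fin 3 ⊕ Fin 1 → ℝ := Sum.elim v (fun _ => a)


lemma skew_add' (a b : Fin 3 → ℝ) : skew (a + b) = skew a + skew b := by
  ext i j; fin_cases i <;> fin_cases j <;>
    simp [skew] <;> ring

lemma skew_anticomm (a b : Fin 3 → ℝ) : skew a *ᵥ b = -(skew b *ᵥ a) := by
  funext i; fin_cases i <;>
    simp [skew, mulVec, dotProduct, Fin.sum_univ_three] <;> ring

lemma skew_transpose' (a : Fin 3 → ℝ) : (skew a)ᵀ = -skew a := by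
  ext i j; fin_cases i <;> fin_cases j <;> simp [skew]

lemma hd_mulVec {t : ℝ} {M : ℝ → Matrix (Fin 3) (Fin 3) ℝ} {v : ℝ → Fin 3 → ℝ}
    {M' : Matrix (Fin 3) (Fin 3) ℝ} {v' : Fin 3 → ℝ}
    (hM : ∀ i j, HasDerivAt (fun s => M s i j) (M' i j) t)
    (hv : ∀ k, HasDerivAt (fun s => v s k) (v' k) t) (j : Fin 3) :
    HasDerivAt (fun s => (M s *ᵥ v s) j) ((M' *ᵥ v t + M t *ᵥ v') j) t := by
  simp only [mulVec, dotProduct]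
  have h := HasDerivAt.fun_sum (fun k (_ : k ∈ Finset.univ) => (hM j k).fun_mul (hv k))
  refine h.congr_deriv ?_
  simp [Pi.add_apply, Finset.sum_add_distrib, mulVec, dotProduct]

/-- the landmark-error dynamics. With true kinematics `Ṙ = R[Ω]×`,
`Ṗ = R V`, observer kinematics `Ṙ̂ = R̂[Ω_m − b̂_Ω − W_Ω]×`, `Ṗ̂ = R̂(V_m − b̂_V − W_V)`,
`Ω_m = Ω + b_Ω`, `V_m = V + b_V`, a fixed landmark `p`, `y = Rᵀ(p − P)`,
`e = p̂ − (R̂ y + P̂)`, `b̃_Ω = b_Ω − b̂_Ω`, `b̃_V = b_V − b̂_V`: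
`ė = ṗ̂ + R̂ [y]× (b̃_Ω − W_Ω) − R̂ (b̃_V − W_V)`. -/
theorem landmark_error_dynamics
    (R Rh : ℝ → Matrix (Fin 3) (Fin 3) ℝ) (P Ph ph : ℝ → Fin 3 → ℝ)
    (Ω V : ℝ → Fin 3 → ℝ) (bΩ bV : Fin 3 → ℝ)
    (bhΩ bhV WΩ WV : ℝ → Fin 3 → ℝ) (p : Fin 3 → ℝ) (ph' : ℝ → Fin 3 → ℝ)
    (hSO : ∀ t, R t * (R t)ᵀ = 1 ∧ (R t).det = 1)
    (hSOh : ∀ t, Rh t * (Rh t)ᵀ = 1 ∧ (Rh t).det = 1)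
    (hR : ∀ t i j, HasDerivAt (fun s => R s i j) ((R t * skew (Ω t)) i j) t)
    (hP : ∀ t j, HasDerivAt (fun s => P s j) ((R t *ᵥ V t) j) t)
    (hRh : ∀ t i j, HasDerivAt (fun s => Rh s i j)
      ((Rh t * skew ((Ω t + bΩ) - bhΩ t - WΩ t)) i j) t)
    (hPh : ∀ t j, HasDerivAt (fun s => Ph s j)
      ((Rh t *ᵥ ((V t + bV) - bhV t - WV t)) j) t)
    (hph : ∀ t j, HasDerivAt (fun s => ph s j) (ph' t j) t)
    (y e : ℝ → Fin 3 → ℝ)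
    (hy : ∀ t, y t = (R t)ᵀ *ᵥ (p - P t))
    (he : ∀ t, e t = ph t - (Rh t *ᵥ y t + Ph t)) :
    ∀ t j, HasDerivAt (fun s => e s j)
      ((ph' t + (Rh t * skew (y t)) *ᵥ ((bΩ - bhΩ t) - WΩ t)
        - Rh t *ᵥ ((bV - bhV t) - WV t)) j) t := by
  intro t j
  obtain ⟨hRRt, _⟩ := hSO t
  have hRtR : (R t)ᵀ * R t = 1 := mul_eq_one_comm.mp hRRt
  -- derivative of y
  have hy' : ∀ k, HasDerivAt (fun s => y s k)
      ((-(skew (Ω t) *ᵥ y t) - V t) k) t := by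
    intro k
    have hfun : (fun s => y s k) = fun s => ((R s)ᵀ *ᵥ (p - P s)) k := by
      funext s; rw [hy]
    rw [hfun]
    have hvk : ∀ k, HasDerivAt (fun s => (p - P s) k) ((-(R t *ᵥ V t)) k) t := by
      intro k
      simpa using (hasDerivAt_const t (p k)).fun_sub (hP t k)
    have h := hd_mulVec (M := fun s => (R s)ᵀ) (v := fun s => p - P s)
      (M' := (R t * skew (Ω t))ᵀ) (v' := -(R t *ᵥ V t))
      (fun i j => hR t j i) hvk k
    have hval : (R t * skew (Ω t))ᵀ *ᵥ (p - P t) + (R t)ᵀ *ᵥ -(R t *ᵥ V t)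
        = -(skew (Ω t) *ᵥ y t) - V t := by
      rw [Matrix.transpose_mul, skew_transpose', Matrix.mulVec_neg,
        Matrix.mulVec_mulVec, hRtR, Matrix.one_mulVec, Matrix.neg_mul,
        Matrix.neg_mulVec, ← Matrix.mulVec_mulVec, ← hy t]
      abel
    rw [hval] at h
    exact h
  -- derivative of Rh *ᵥ y
  have hRhy : HasDerivAt (fun s => (Rh s *ᵥ y s) j)
      (((Rh t * skew (Ω t + bΩ - bhΩ t - WΩ t)) *ᵥ y t
        + Rh t *ᵥ (-(skew (Ω t) *ᵥ y t) - V t)) j) t :=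
    hd_mulVec (fun i j => hRh t i j) hy' j
  have hefun : (fun s => e s j) = fun s => ph s j - ((Rh s *ᵥ y s) j + Ph s j) := by
    funext s; rw [he]; simp
  rw [hefun]
  have h := (hph t j).fun_sub (hRhy.fun_add (hPh t j))
  refine h.congr_deriv ?_
  have hsplit : skew (Ω t + bΩ - bhΩ t - WΩ t)
      = skew (Ω t) + skew (bΩ - bhΩ t - WΩ t) := by
    have h2 : Ω t + bΩ - bhΩ t - WΩ t = Ω t + (bΩ - bhΩ t - WΩ t) := by abel
    rw [h2, skew_add']
  have hanti : skew (bΩ - bhΩ t - WΩ t) *ᵥ y t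
      = -(skew (y t) *ᵥ (bΩ - bhΩ t - WΩ t)) := skew_anticomm _ _
  simp only [hsplit, Matrix.mul_add, Matrix.add_mulVec, ← Matrix.mulVec_mulVec,
    hanti, Matrix.mulVec_sub, Matrix.mulVec_add, Matrix.mulVec_neg,
    Pi.add_apply, Pi.sub_apply, Pi.neg_apply]
  ring
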